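/- arXiv:0704.2777 — 3 statements merged into one kernel-verified Lean document; each statement's English description precedes it below -/
import Mathlib

section
/- Suppose W₁ = V₁^⊥ and W₂ = V₂^⊥ for a nondegenerate reflexive bilinear form ⟨·,·⟩ on E, and let L = p_{V₁}^{V₂} − p_{W₂}^{W₁} and L' = p_{V₁}^{V₂} − p_{W₁}^{W₂}. Then: (i) L is anti-self-adjoint with respect to ⟨·,·⟩ (⟨Lx, y⟩ = −⟨x, Ly⟩ for all x, y ∈ E), the generalized eigenspaces E_{(L,1)} and E_{(L,-1)} are totally isotropic, and their direct sum E_{(L,1)} ⊕ E_{(L,-1)} is a nondegenerate subspace; (ii) L' is self-adjoint with respect to ⟨·,·⟩ (⟨L'x, y⟩ = ⟨x, L'y⟩ for all x, y ∈ E), and the generalized eigenspaces E_{(L',1)} and E_{(L',-1)} are nondegenerate subspaces orthogonal to each other. -/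
open Submodule

/-- The projection onto `A` along a complement `B`, as an endomorphism of `E`. -/
noncomputable def projAlong {K E : Type*} [Field K] [AddCommGroup E] [Module K E]
    (A B : Submodule K E) (h : IsCompl A B) : E →ₗ[K] E :=
  A.subtype ∘ₗ A.linearProjOfIsCompl B h

/-- The generalized eigenspace `E_{(L,μ)} = ∪ₙ ker (L − μ·id)ⁿ`. -/
noncomputable def genEigen {K E : Type*} [Field K] [AddCommGroup E] [Module K E]
    (L : Module.End K E) (μ : K) : Submodule K E :=
  ⨆ n : ℕ, LinearMap.ker ((L - μ • (1 : Module.End K E)) ^ n)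

section Aux

variable {K E : Type*} [Field K] [AddCommGroup E] [Module K E]

lemma mem_genEigen {L : Module.End K E} {μ : K} {x : E} :
    x ∈ genEigen L μ ↔ ∃ n : ℕ, ((L - μ • (1 : Module.End K E)) ^ n) x = 0 := by
  unfold genEigen
  rw [Submodule.mem_iSup_of_directed]
  · simp [LinearMap.mem_ker]
  · exact Monotone.directed_le fun m n h => by
      simpa using (L - μ • (1 : Module.End K E)).iterateKer.monotone h

lemma genEigen_eq (L : Module.End K E) (μ : K) :
    genEigen L μ = L.genEigenspace μ ⊤ := by
  ext x
  rw [mem_genEigen, Module.End.mem_genEigenspace_top]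
  simp [LinearMap.mem_ker]

lemma projAlong_mem {A B : Submodule K E} (h : IsCompl A B) (x : E) :
    projAlong A B h x ∈ A := (A.linearProjOfIsCompl B h x).2

lemma projAlong_add {A B : Submodule K E} (h : IsCompl A B) (x : E) :
    projAlong A B h x + projAlong B A h.symm x = x :=
  Submodule.projection_add_projection_eq_self h x

lemma sub_projAlong_mem {A B : Submodule K E} (h : IsCompl A B) (x : E) :
    x - projAlong A B h x ∈ B := by
  have h1 : projAlong B A h.symm x = x - projAlong A B h x :=
    eq_sub_of_add_eq' (projAlong_add h x)
  rw [← h1]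
  exact projAlong_mem h.symm x

lemma adj_proj (B : LinearMap.BilinForm K E) {A C X Y : Submodule K E}
    (hAC : IsCompl A C) (hXY : IsCompl X Y)
    (hX : X ≤ B.orthogonal C) (hY : Y ≤ B.orthogonal A) (x y : E) :
    B (projAlong A C hAC x) y = B x (projAlong X Y hXY y) := by
  set P := projAlong A C hAC with hP
  set Q := projAlong X Y hXY with hQ
  have h1 : B (P x) (y - Q y) = 0 :=
    hY (sub_projAlong_mem hXY y) (P x) (projAlong_mem hAC x)
  have h2 : B (x - P x) (Q y) = 0 :=
    hX (projAlong_mem hXY y) (x - P x) (sub_projAlong_mem hAC x)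
  rw [map_sub] at h1
  rw [map_sub, LinearMap.sub_apply] at h2
  rw [sub_eq_zero.mp h1]
  exact (sub_eq_zero.mp h2).symm

lemma pow_apply_zero_mono (f : Module.End K E) {m n : ℕ} (h : m ≤ n) {x : E}
    (hx : (f ^ m) x = 0) : (f ^ n) x = 0 := by
  rw [← Nat.sub_add_cancel h, pow_add, Module.End.mul_apply, hx, map_zero]

lemma ortho_aux (B : LinearMap.BilinForm K E) (L M : Module.End K E)
    (hadj : ∀ x y, B (L x) y = B x (M y)) {lam mu : K} (hne : lam - mu ≠ 0) :
    ∀ (k m n : ℕ), m + n ≤ k → ∀ x y : E,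
      ((L - lam • (1 : Module.End K E)) ^ m) x = 0 →
      ((M - mu • (1 : Module.End K E)) ^ n) y = 0 →
      B x y = 0 := by
  intro k
  induction k with
  | zero =>
    intro m n hmn x y hx hy
    obtain ⟨rfl, rfl⟩ : m = 0 ∧ n = 0 := by omega
    simp only [pow_zero, Module.End.one_apply] at hx
    rw [hx]; simp
  | succ k ih =>
    intro m n hmn x y hx hy
    rcases m with _ | m
    · simp only [pow_zero, Module.End.one_apply] at hx
      rw [hx]; simp
    rcases n with _ | n
    · simp only [pow_zero, Module.End.one_apply] at hy
      rw [hy]; simp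
    have hx' : ((L - lam • (1 : Module.End K E)) ^ m)
        ((L - lam • (1 : Module.End K E)) x) = 0 := by
      rw [← Module.End.mul_apply, ← pow_succ]; exact hx
    have hy' : ((M - mu • (1 : Module.End K E)) ^ n)
        ((M - mu • (1 : Module.End K E)) y) = 0 := by
      rw [← Module.End.mul_apply, ← pow_succ]; exact hy
    have t1 : B ((L - lam • (1 : Module.End K E)) x) y = 0 :=
      ih m (n + 1) (by omega) _ _ hx' hy
    have t2 : B x ((M - mu • (1 : Module.End K E)) y) = 0 :=
      ih (m + 1) n (by omega) _ _ hx hy'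
    have key : (lam - mu) * B x y =
        -B ((L - lam • (1 : Module.End K E)) x) y +
          B x ((M - mu • (1 : Module.End K E)) y) := by
      simp only [LinearMap.sub_apply, LinearMap.smul_apply, Module.End.one_apply,
        map_sub, map_smul, smul_eq_mul]
      rw [hadj x y]
      ring
    rw [t1, t2] at key
    simp only [neg_zero, add_zero] at key
    rcases mul_eq_zero.mp key with h | h
    · exact absurd h hne
    · exact h

lemma move_sym (B : LinearMap.BilinForm K E) (L : Module.End K E)
    (hadj : ∀ x y, B (L x) y = B x (L y)) (a : K) :
    ∀ (n : ℕ) (x y : E),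
      B x (((L - a • (1 : Module.End K E)) ^ n) y) =
        B (((L - a • (1 : Module.End K E)) ^ n) x) y := by
  intro n
  induction n with
  | zero => intro x y; simp
  | succ n ih =>
    intro x y
    have step : ∀ u v : E, B u ((L - a • (1 : Module.End K E)) v) =
        B ((L - a • (1 : Module.End K E)) u) v := by
      intro u v
      simp only [LinearMap.sub_apply, LinearMap.smul_apply, Module.End.one_apply,
        map_sub, map_smul, smul_eq_mul]
      rw [hadj]
    conv_lhs => rw [pow_succ, Module.End.mul_apply]
    conv_rhs => rw [pow_succ' (L - a • (1 : Module.End K E)) n, Module.End.mul_apply]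
    rw [ih x ((L - a • (1 : Module.End K E)) y), step]

lemma move_anti (B : LinearMap.BilinForm K E) (L : Module.End K E)
    (hanti : ∀ x y, B (L x) y = -B x (L y)) (a : K) :
    ∀ (n : ℕ) (x y : E),
      B x (((L - a • (1 : Module.End K E)) ^ n) y) =
        (-1 : K) ^ n * B (((L + a • (1 : Module.End K E)) ^ n) x) y := by
  intro n
  induction n with
  | zero => intro x y; simp
  | succ n ih =>
    intro x y
    have step : ∀ u v : E, B u ((L - a • (1 : Module.End K E)) v) =
        -B ((L + a • (1 : Module.End K E)) u) v := by
      intro u v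
      simp only [LinearMap.sub_apply, LinearMap.add_apply, LinearMap.smul_apply,
        Module.End.one_apply, map_sub, map_add, map_smul, smul_eq_mul]
      rw [hanti]
      ring
    conv_lhs => rw [pow_succ, Module.End.mul_apply]
    conv_rhs => rw [pow_succ' (L + a • (1 : Module.End K E)) n, Module.End.mul_apply]
    rw [ih x ((L - a • (1 : Module.End K E)) y), step]
    ring

lemma neg_conv {L : Module.End K E} {a : K} {n : ℕ} {y : E}
    (h : ((L - a • (1 : Module.End K E)) ^ n) y = 0) :
    (((-L) - (-a) • (1 : Module.End K E)) ^ n) y = 0 := by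
  have e : (-L) - (-a) • (1 : Module.End K E) = -(L - a • (1 : Module.End K E)) := by
    rw [neg_smul]; abel
  rw [e, neg_pow, Module.End.mul_apply, h, map_zero]

lemma nondeg_sym [FiniteDimensional K E] (B : LinearMap.BilinForm K E)
    (hBnd : B.Nondegenerate) (hBrefl : B.IsRefl) (L' : Module.End K E)
    (hsym : ∀ x y, B (L' x) y = B x (L' y)) (c : K) :
    genEigen L' c ⊓ B.orthogonal (genEigen L' c) = ⊥ := by
  rw [eq_bot_iff]
  rintro x hx
  obtain ⟨hx1, hx2⟩ := Submodule.mem_inf.mp hx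
  rw [Submodule.mem_bot]
  apply hBnd.1
  intro z
  obtain ⟨m, hm⟩ := mem_genEigen.mp hx1
  set f := L' - c • (1 : Module.End K E) with hfdef
  obtain ⟨n₀, hn₀⟩ := Filter.eventually_atTop.mp f.eventually_codisjoint_ker_pow_range_pow
  set N := max n₀ m with hN
  have hcd := hn₀ N (le_max_left _ _)
  rw [codisjoint_iff] at hcd
  have hzmem : z ∈ LinearMap.ker (f ^ N) ⊔ LinearMap.range (f ^ N) := by
    rw [hcd]; exact Submodule.mem_top
  obtain ⟨a, ha, b, hb, hab⟩ := Submodule.mem_sup.mp hzmem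
  obtain ⟨u, rfl⟩ := hb
  have h1 : B x a = 0 :=
    hBrefl _ _ (hx2 a (mem_genEigen.mpr ⟨N, LinearMap.mem_ker.mp ha⟩))
  have h2 : B x ((f ^ N) u) = 0 := by
    rw [move_sym B L' hsym c N x u]
    have : (f ^ N) x = 0 := pow_apply_zero_mono f (le_max_right _ _) hm
    rw [this]
    simp
  rw [← hab, map_add, h1, h2, add_zero]

end Aux

/-- In the reflexive case (`W₁ = V₁^⊥`, `W₂ = V₂^⊥`), with
`L = p_{V₁}^{V₂} − p_{W₂}^{W₁}` and `L' = p_{V₁}^{V₂} − p_{W₁}^{W₂}`: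
(i) `L` is anti-self-adjoint, `E_{(L,1)}` and `E_{(L,-1)}` are totally isotropic and
their direct sum is nondegenerate;
(ii) `L'` is self-adjoint, `E_{(L',1)}` and `E_{(L',-1)}` are nondegenerate and
orthogonal to each other. -/
theorem stmt15 {K E : Type*} [Field K] [AddCommGroup E] [Module K E]
    [FiniteDimensional K E] (hchar : (2 : K) ≠ 0)
    (B : LinearMap.BilinForm K E) (hBnd : B.Nondegenerate) (hBrefl : B.IsRefl)
    (V : Fin 2 → Submodule K E) (hV : IsCompl (V 0) (V 1))
    (W : Fin 2 → Submodule K E) (hWdef : ∀ i, W i = B.orthogonal (V i))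
    (hW : IsCompl (W 0) (W 1))
    (L L' : Module.End K E)
    (hL : L = projAlong (V 0) (V 1) hV - projAlong (W 1) (W 0) hW.symm)
    (hL' : L' = projAlong (V 0) (V 1) hV - projAlong (W 0) (W 1) hW) :
    ((∀ x y : E, B (L x) y = - B x (L y)) ∧
      (∀ x ∈ genEigen L 1, ∀ y ∈ genEigen L 1, B x y = 0) ∧
      (∀ x ∈ genEigen L (-1), ∀ y ∈ genEigen L (-1), B x y = 0) ∧
      Disjoint (genEigen L 1) (genEigen L (-1)) ∧
      (genEigen L 1 ⊔ genEigen L (-1)) ⊓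
          B.orthogonal (genEigen L 1 ⊔ genEigen L (-1)) = ⊥) ∧
    ((∀ x y : E, B (L' x) y = B x (L' y)) ∧
      genEigen L' 1 ⊓ B.orthogonal (genEigen L' 1) = ⊥ ∧
      genEigen L' (-1) ⊓ B.orthogonal (genEigen L' (-1)) = ⊥ ∧
      (∀ x ∈ genEigen L' 1, ∀ y ∈ genEigen L' (-1), B x y = 0)) := by
  have hne : (1 : K) ≠ -1 := fun h => hchar (by linear_combination h)
  have hdo : ∀ i, V i ≤ B.orthogonal (W i) := fun i => by
    rw [hWdef i]; exact LinearMap.BilinForm.le_orthogonal_orthogonal hBrefl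
  set P := projAlong (V 0) (V 1) hV with hP
  set Q := projAlong (W 1) (W 0) hW.symm with hQ
  set Q' := projAlong (W 0) (W 1) hW with hQ'
  have hPQ : ∀ x y, B (P x) y = B x (Q y) :=
    adj_proj B hV hW.symm (le_of_eq (hWdef 1)) (le_of_eq (hWdef 0))
  have hQP : ∀ x y, B (Q x) y = B x (P y) :=
    adj_proj B hW.symm hV (hdo 0) (hdo 1)
  have hQ'R : ∀ x y, B (Q' x) y = B x (projAlong (V 1) (V 0) hV.symm y) :=
    adj_proj B hW hV.symm (hdo 1) (hdo 0)
  have hRy : ∀ y, projAlong (V 1) (V 0) hV.symm y = y - P y := fun y =>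
    eq_sub_of_add_eq' (projAlong_add hV y)
  have hQ'y : ∀ y, Q' y = y - Q y := fun y => eq_sub_of_add_eq (projAlong_add hW y)
  -- anti-self-adjointness of L
  have hanti : ∀ x y, B (L x) y = -B x (L y) := by
    intro x y
    rw [hL]
    rw [LinearMap.sub_apply, map_sub, LinearMap.sub_apply, hPQ, hQP,
      LinearMap.sub_apply, map_sub]
    ring
  -- self-adjointness of L'
  have hsym : ∀ x y, B (L' x) y = B x (L' y) := by
    intro x y
    rw [hL']
    rw [LinearMap.sub_apply, map_sub, LinearMap.sub_apply, hPQ, hQ'R, hRy,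
      LinearMap.sub_apply, map_sub, map_sub, hQ'y, map_sub]
    ring
  have hadjM : ∀ x y, B (L x) y = B x ((-L) y) := by
    intro x y
    rw [hanti x y, LinearMap.neg_apply, map_neg]
  have hne2 : (1 : K) - (-1) ≠ 0 := by
    have : (1 : K) - (-1) = 2 := by ring
    rw [this]; exact hchar
  have hne2' : (-1 : K) - 1 ≠ 0 := by
    have : (-1 : K) - 1 = -2 := by ring
    rw [this]; exact neg_ne_zero.mpr hchar
  constructor
  · refine ⟨hanti, ?_, ?_, ?_, ?_⟩
    · -- E₁ totally isotropic
      intro x hx y hy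
      obtain ⟨m, hm⟩ := mem_genEigen.mp hx
      obtain ⟨n, hn⟩ := mem_genEigen.mp hy
      have hn' : (((-L) - (-1 : K) • (1 : Module.End K E)) ^ n) y = 0 := neg_conv hn
      exact ortho_aux B L (-L) hadjM hne2 (m + n) m n le_rfl x y hm hn'
    · -- E₋₁ totally isotropic
      intro x hx y hy
      obtain ⟨m, hm⟩ := mem_genEigen.mp hx
      obtain ⟨n, hn⟩ := mem_genEigen.mp hy
      have hn' : (((-L) - (1 : K) • (1 : Module.End K E)) ^ n) y = 0 := by
        have := neg_conv hn
        rwa [neg_neg] at this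
      exact ortho_aux B L (-L) hadjM hne2' (m + n) m n le_rfl x y hm hn'
    · -- disjointness
      rw [genEigen_eq, genEigen_eq]
      exact Module.End.disjoint_genEigenspace L hne ⊤ ⊤
    · -- nondegeneracy of E₁ ⊔ E₋₁
      rw [eq_bot_iff]
      rintro x hx
      obtain ⟨hxS, hxO⟩ := Submodule.mem_inf.mp hx
      rw [Submodule.mem_bot]
      apply hBnd.1
      intro z
      have hBxS : ∀ s ∈ genEigen L 1 ⊔ genEigen L (-1), B x s = 0 := fun s hs =>
        hBrefl s x (hxO s hs)
      set f := L - (1 : K) • (1 : Module.End K E) with hf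
      set g := L + (1 : K) • (1 : Module.End K E) with hg
      have hg' : L - (-1 : K) • (1 : Module.End K E) = g := by
        rw [neg_smul, sub_neg_eq_add]
      have hf' : L + (-1 : K) • (1 : Module.End K E) = f := by
        rw [neg_smul, ← sub_eq_add_neg]
      have hfg : Commute f g := by
        have c1 : Commute L g :=
          ((Commute.refl L).add_right ((Commute.one_right L).smul_right 1))
        have c2 : Commute ((1 : K) • (1 : Module.End K E)) g :=
          (Commute.one_left g).smul_left 1
        exact c1.sub_left c2
      obtain ⟨p, hp', q, hq', hpq⟩ := Submodule.mem_sup.mp hxS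
      obtain ⟨m₁, hm₁⟩ := mem_genEigen.mp hp'
      obtain ⟨m₂, hm₂⟩ := mem_genEigen.mp hq'
      rw [hg'] at hm₂
      obtain ⟨n₁, hn₁⟩ := Filter.eventually_atTop.mp f.eventually_codisjoint_ker_pow_range_pow
      obtain ⟨n₂, hn₂⟩ := Filter.eventually_atTop.mp g.eventually_codisjoint_ker_pow_range_pow
      set N₁ := max n₁ m₂ with hN₁
      set N₂ := max n₂ m₁ with hN₂
      have hcd₁ := hn₁ N₁ (le_max_left _ _)
      have hcd₂ := hn₂ N₂ (le_max_left _ _)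
      rw [codisjoint_iff] at hcd₁ hcd₂
      have hz1 : z ∈ LinearMap.ker (f ^ N₁) ⊔ LinearMap.range (f ^ N₁) := by
        rw [hcd₁]; exact Submodule.mem_top
      obtain ⟨a, ha, b, hb, hab⟩ := Submodule.mem_sup.mp hz1
      obtain ⟨u, rfl⟩ := hb
      have hu1 : u ∈ LinearMap.ker (g ^ N₂) ⊔ LinearMap.range (g ^ N₂) := by
        rw [hcd₂]; exact Submodule.mem_top
      obtain ⟨b', hb', c, hc, hbc⟩ := Submodule.mem_sup.mp hu1
      obtain ⟨v, rfl⟩ := hc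
      -- B x a = 0
      have hBa : B x a = 0 := by
        apply hBxS
        exact Submodule.mem_sup_left (mem_genEigen.mpr ⟨N₁, LinearMap.mem_ker.mp ha⟩)
      -- B x (f^N₁ b') = 0
      have hBb : B x ((f ^ N₁) b') = 0 := by
        apply hBxS
        apply Submodule.mem_sup_right
        apply mem_genEigen.mpr
        refine ⟨N₂, ?_⟩
        rw [hg']
        have : (g ^ N₂) ((f ^ N₁) b') = ((f ^ N₁) * (g ^ N₂)) b' := by
          rw [← Module.End.mul_apply, (hfg.symm.pow_pow N₂ N₁)]
        rw [this, Module.End.mul_apply, LinearMap.mem_ker.mp hb', map_zero]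
      -- B x (f^N₁ (g^N₂ v)) = 0
      have hBc : B x ((f ^ N₁) ((g ^ N₂) v)) = 0 := by
        have e1 := move_anti B L hanti 1 N₁ x ((g ^ N₂) v)
        rw [e1]
        have e2 := move_anti B L hanti (-1) N₂ ((g ^ N₁) x) v
        rw [hg', hf'] at e2
        rw [e2]
        have hx0 : (f ^ N₂) ((g ^ N₁) x) = 0 := by
          rw [← hpq, map_add, map_add]
          have t1 : (f ^ N₂) ((g ^ N₁) p) = 0 := by
            have : (f ^ N₂) ((g ^ N₁) p) = (g ^ N₁) ((f ^ N₂) p) := by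
              rw [← Module.End.mul_apply, ← Module.End.mul_apply, hfg.pow_pow N₂ N₁]
            rw [this, pow_apply_zero_mono f (le_max_right n₂ m₁) hm₁, map_zero]
          have t2 : (f ^ N₂) ((g ^ N₁) q) = 0 := by
            rw [pow_apply_zero_mono g (le_max_right n₁ m₂) hm₂, map_zero]
          rw [t1, t2, add_zero]
        rw [hx0]
        simp
      rw [← hab, ← hbc, map_add, map_add, map_add, hBa, hBb, hBc]
      ring
  · refine ⟨hsym, nondeg_sym B hBnd hBrefl L' hsym 1, nondeg_sym B hBnd hBrefl L' hsym (-1), ?_⟩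
    intro x hx y hy
    obtain ⟨m, hm⟩ := mem_genEigen.mp hx
    obtain ⟨n, hn⟩ := mem_genEigen.mp hy
    exact ortho_aux B L' L' hsym hne2 (m + n) m n le_rfl x y hm hn
end

section
/- Let F₁, …, F_r be subspaces of E forming an internal direct sum E = F₁ ⊕ ⋯ ⊕ F_r, and let R be a formal curvature tensor on E such that R(x,y)(F_l) ⊆ F_l for all x, y ∈ E and all l. Then for all indices i, j, k with k ∉ {i, j} and all x ∈ F_i, y ∈ F_j, z ∈ F_k, one has R(x,y)z = 0. -/
open Submodule

/-- If `E = F₁ ⊕ ⋯ ⊕ F_r` and `R` is a formal curvature tensor (antisymmetric, first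
Bianchi identity) whose operators preserve each `F_l`, then `R(x,y)z = 0` whenever
`x ∈ F_i`, `y ∈ F_j`, `z ∈ F_k` with `k ∉ {i,j}`. -/
theorem stmt17 {K E : Type*} [Field K] [AddCommGroup E] [Module K E]
    [FiniteDimensional K E] (hchar : (2 : K) ≠ 0)
    (r : ℕ) (F : Fin r → Submodule K E)
    (hind : iSupIndep F) (hsup : (⨆ l, F l) = ⊤)
    (R : E →ₗ[K] E →ₗ[K] Module.End K E)
    (hanti : ∀ x y : E, R x y = - R y x)
    (hbianchi : ∀ x y z : E, R x y z + R y z x + R z x y = 0)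
    (hpres : ∀ (x y : E) (l : Fin r), ∀ z ∈ F l, R x y z ∈ F l) :
    ∀ i j k : Fin r, k ≠ i → k ≠ j →
      ∀ x ∈ F i, ∀ y ∈ F j, ∀ z ∈ F k, R x y z = 0 := by
  intro i j k hki hkj x hx y hy z hz
  have h1 : R x y z ∈ F k := hpres x y k z hz
  have h2 : R x y z ∈ ⨆ l ≠ k, F l := by
    have hb := hbianchi x y z
    have : R x y z = -(R y z x) + -(R z x y) := by
      rw [add_assoc, add_eq_zero_iff_eq_neg] at hb
      rw [hb, neg_add]
    rw [this]
    exact add_mem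
      (neg_mem (le_biSup (fun l => F l) (Ne.symm hki) (hpres y z i x hx)))
      (neg_mem (le_biSup (fun l => F l) (Ne.symm hkj) (hpres z x j y hy)))
  have := (hind k).le_bot ⟨h1, by simpa using h2⟩
  simpa using this
end

section
/- Suppose ⟨·,·⟩ is a nondegenerate symmetric bilinear form on E, W₁ = V₁^⊥, W₂ = V₂^⊥, and E = F_e (where F_e is formed from V₁, V₂, W₁, W₂). Let R be a formal curvature tensor on E such that every operator R(x,y) preserves V₁ and V₂ and is skew-adjoint with respect to ⟨·,·⟩ (⟨R(x,y)z, t⟩ + ⟨z, R(x,y)t⟩ = 0 for all x, y, z, t ∈ E). Then R(x,y) = 0 for all x, y ∈ V₁, and R(x',y') = 0 for all x', y' ∈ V₂. -/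
open Submodule

/-- For a permutation `σ` of `{1,2}`, the increasing sequence of subspaces `F_σ(n)`:
`F_σ(0) = ⊥`, `F_σ(n+1) = Σ_i (F_σ(n) + Vᵢ) ⊓ (F_σ(n) + W_{σ(i)})`. -/
noncomputable def Fsig {K E : Type*} [Field K] [AddCommGroup E] [Module K E]
    (V W : Fin 2 → Submodule K E) (σ : Equiv.Perm (Fin 2)) : ℕ → Submodule K E
  | 0 => ⊥
  | n + 1 => ⨆ i : Fin 2, (Fsig V W σ n ⊔ V i) ⊓ (Fsig V W σ n ⊔ W (σ i))

/-- Key auxiliary lemma: a skew-adjoint operator that preserves `V i`, kills `V j`,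
vanishes identically provided `E = ⋃ Fsig`. -/
lemma aux18 {K E : Type*} [Field K] [AddCommGroup E] [Module K E]
    (B : LinearMap.BilinForm K E) (hBnd : B.Nondegenerate)
    (V W : Fin 2 → Submodule K E) (hWdef : ∀ k, W k = B.orthogonal (V k))
    (hFe : (⨆ n : ℕ, Fsig V W 1 n) = ⊤)
    (i j : Fin 2) (hij : ∀ k : Fin 2, k = i ∨ k = j)
    (hsup : V i ⊔ V j = ⊤)
    (A : E →ₗ[K] E)
    (hApres : ∀ z ∈ V i, A z ∈ V i)
    (hAkill : ∀ z ∈ V j, A z = 0)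
    (hAskew : ∀ z t : E, B (A z) t + B z (A t) = 0) :
    A = 0 := by
  ext z
  simp only [LinearMap.zero_apply]
  have hz : A z ∈ V i := by
    have hzt : z ∈ V i ⊔ V j := hsup ▸ mem_top
    obtain ⟨a, ha, b, hb, hab⟩ := Submodule.mem_sup.mp hzt
    have : A z = A a := by rw [← hab, map_add, hAkill b hb, add_zero]
    rw [this]; exact hApres a ha
  have hVj : V j ≤ LinearMap.ker (B (A z)) := by
    intro t ht
    rw [LinearMap.mem_ker]
    have h := hAskew z t
    rw [hAkill t ht, map_zero, add_zero] at h
    exact h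
  have hWi : W i ≤ LinearMap.ker (B (A z)) := by
    intro t ht
    rw [hWdef] at ht
    exact (LinearMap.BilinForm.mem_orthogonal_iff.mp ht) (A z) hz
  have key : ∀ n, Fsig V W 1 n ≤ LinearMap.ker (B (A z)) := by
    intro n
    induction n with
    | zero => exact bot_le
    | succ n ih =>
      rw [Fsig]
      refine iSup_le fun k => ?_
      rcases hij k with hk | hk
      · subst hk
        refine le_trans inf_le_right (sup_le ih ?_)
        simpa using hWi
      · subst hk
        exact le_trans inf_le_left (sup_le ih hVj)
  have hker : LinearMap.ker (B (A z)) = ⊤ :=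
    top_unique (hFe ▸ iSup_le key)
  refine hBnd.1 (A z) fun t => ?_
  have : t ∈ LinearMap.ker (B (A z)) := hker ▸ mem_top
  simpa using this

/-- If `⟨·,·⟩` is nondegenerate symmetric, `Wᵢ = Vᵢ^⊥`, `E = F_e`, and `R` is a formal
curvature tensor whose operators preserve `V₁` and `V₂` and are skew-adjoint, then
`R(x,y) = 0` for `x, y ∈ V₁` and `R(x',y') = 0` for `x', y' ∈ V₂`. -/
theorem stmt18 {K E : Type*} [Field K] [AddCommGroup E] [Module K E]
    [FiniteDimensional K E] (hchar : (2 : K) ≠ 0)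
    (B : LinearMap.BilinForm K E) (hBnd : B.Nondegenerate) (hBsymm : B.IsSymm)
    (V : Fin 2 → Submodule K E) (hV : IsCompl (V 0) (V 1))
    (W : Fin 2 → Submodule K E) (hWdef : ∀ i, W i = B.orthogonal (V i))
    (hFe : (⨆ n : ℕ, Fsig V W 1 n) = ⊤)
    (R : E →ₗ[K] E →ₗ[K] Module.End K E)
    (hanti : ∀ x y : E, R x y = - R y x)
    (hbianchi : ∀ x y z : E, R x y z + R y z x + R z x y = 0)
    (hpres : ∀ (x y : E) (i : Fin 2), ∀ z ∈ V i, R x y z ∈ V i)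
    (hskew : ∀ x y z t : E, B (R x y z) t + B z (R x y t) = 0) :
    (∀ x ∈ V 0, ∀ y ∈ V 0, R x y = 0) ∧
    (∀ x ∈ V 1, ∀ y ∈ V 1, R x y = 0) := by
  constructor
  · intro x hx y hy
    refine aux18 B hBnd V W hWdef hFe 0 1 (by decide) hV.sup_eq_top (R x y)
      (fun z hz => hpres x y 0 z hz) (fun z hz => ?_) (hskew x y)
    have h1 : R x y z ∈ V 1 := hpres x y 1 z hz
    have h0 : R x y z ∈ V 0 := by
      have hb := hbianchi x y z
      rw [add_assoc] at hb
      have heq : R x y z = -(R y z x + R z x y) := eq_neg_of_add_eq_zero_left hb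
      rw [heq]
      exact neg_mem (add_mem (hpres y z 0 x hx) (hpres z x 0 y hy))
    exact Submodule.disjoint_def.mp hV.disjoint _ h0 h1
  · intro x hx y hy
    refine aux18 B hBnd V W hWdef hFe 1 0 (by decide)
      (by rw [sup_comm]; exact hV.sup_eq_top) (R x y)
      (fun z hz => hpres x y 1 z hz) (fun z hz => ?_) (hskew x y)
    have h0 : R x y z ∈ V 0 := hpres x y 0 z hz
    have h1 : R x y z ∈ V 1 := by
      have hb := hbianchi x y z
      rw [add_assoc] at hb
      have heq : R x y z = -(R y z x + R z x y) := eq_neg_of_add_eq_zero_left hb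
      rw [heq]
      exact neg_mem (add_mem (hpres y z 1 x hx) (hpres z x 1 y hy))
    exact Submodule.disjoint_def.mp hV.disjoint _ h0 h1
end
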